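/- Let 1 < p < q < ∞, α/n = 1/p − 1/q, r = (p+q)/2, β/n = 1/p − 1/r, and μ = ω dx rectangle doubling with doubling exponent γ and reverse-doubling exponent η on each coordinate. Let f ≥ 0 with ‖f‖_{L^p(μ)} finite and positive, θ_t(x) as above, and let τ(t,x) be defined implicitly by θ_t(x)^{1/p} ‖f‖_{L^p(μ)} / (M_β f)(x) = μ{ ∏_i |x_i − y_i| ≤ 2^{τ(t,x) − t_i} }^{1/r}. Then for every j ∈ ℤ and a.e. x, ∫_{Γ_t^j(x)} f(y) V(x,y)^{α/n − 1} dμ(y) ≤ 2^{−η|j − τ(t,x)| min{α−β, n/q}} · 2^{γn} · θ_t(x)^{(1/p)(1 − r/q)} (M_β f)(x)^{r/q} ‖f‖_{L^p(μ)}^{1 − r/q}. -/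

import Mathlib

set_option maxHeartbeats 1000000

open MeasureTheory ENNReal Set

namespace Stmt13Aux

variable {n : ℕ}

def box (c δ : Fin n → ℝ) : Set (Fin n → ℝ) := {y | ∀ i, |c i - y i| ≤ δ i}

lemma box_eq_pi (c δ : Fin n → ℝ) :
    box c δ = Set.pi Set.univ (fun i => Set.Icc (c i - δ i) (c i + δ i)) := by
  ext y
  simp only [box, mem_setOf_eq, Set.mem_pi, Set.mem_univ, true_implies, Set.mem_Icc]
  constructor
  · intro h i; have := abs_le.1 (h i); constructor <;> linarith [this.1, this.2]
  · intro h i; rw [abs_le]; have := h i; constructor <;> linarith [this.1, this.2]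

lemma box_measurable (c δ : Fin n → ℝ) : MeasurableSet (box c δ) := by
  rw [box_eq_pi]; exact MeasurableSet.univ_pi fun i => measurableSet_Icc

lemma slice_box (ω : (Fin n → ℝ) → ℝ≥0∞) (hω : Measurable ω) (i : Fin n) (K : ℝ≥0∞)
    (hK : K ≠ ⊤) (c : Fin n → ℝ) (r r' : ℝ)
    (hsl : ∀ᵐ x ∂(volume : Measure (Fin n → ℝ)),
      ∫⁻ u in Icc (c i - r') (c i + r'), ω (Function.update x i u) ≤
        K * ∫⁻ u in Icc (c i - r) (c i + r), ω (Function.update x i u))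
    (δ : Fin n → ℝ) :
    (volume.withDensity ω) (box c (Function.update δ i r')) ≤
      K * (volume.withDensity ω) (box c (Function.update δ i r)) := by
  have uinst : Unique {j : Fin n // ¬¬j = i} :=
    ⟨⟨⟨i, not_not_intro rfl⟩⟩, by rintro ⟨j, h⟩; have hj : j = i := not_not.mp h; subst hj; rfl⟩
  set e := (MeasurableEquiv.piEquivPiSubtypeProd (π := fun _ : Fin n => ℝ)
    (fun j : Fin n => ¬ j = i)) with he
  have hsymm : ∀ (z : ({j : Fin n // ¬j = i} → ℝ) × ({j : Fin n // ¬¬j = i} → ℝ)) (j : Fin n),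
      e.symm z j = if h : ¬ j = i then z.1 ⟨j, h⟩ else z.2 ⟨j, h⟩ := fun z j => rfl
  have hupd : ∀ (z₂ : {j : Fin n // ¬j = i} → ℝ) (w₁ : {j : Fin n // ¬¬j = i} → ℝ) (u : ℝ),
      Function.update (e.symm (z₂, w₁)) i u = e.symm (z₂, (fun _ => u)) := by
    intro z₂ w₁ u; funext j
    by_cases h : j = i
    · subst h; simp [hsymm]
    · rw [Function.update_of_ne h, hsymm, hsymm, dif_pos h, dif_pos h]
  set Z : ({j : Fin n // ¬j = i} → ℝ) → (Fin n → ℝ) :=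
    fun z₂ => e.symm (z₂, (fun _ => c i)) with hZ
  have hIcc : ∀ (s u : ℝ), |c i - u| ≤ s ↔ u ∈ Icc (c i - s) (c i + s) := by
    intro s u; rw [mem_Icc, abs_le]
    constructor <;> (intro h; constructor <;> linarith [h.1, h.2])
  have hZj : ∀ (z₂ : {j : Fin n // ¬j = i} → ℝ) (j : Fin n) (h : ¬ j = i),
      Z z₂ j = z₂ ⟨j, h⟩ := by
    intro z₂ j h; rw [hZ]; dsimp only; rw [hsymm, dif_pos h]
  have hmem : ∀ (s : ℝ) (z₂ : {j : Fin n // ¬j = i} → ℝ) (u : ℝ),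
      Function.update (Z z₂) i u ∈ box c (Function.update δ i s) ↔
        (u ∈ Icc (c i - s) (c i + s) ∧ ∀ j : Fin n, ∀ h : ¬ j = i, |c j - z₂ ⟨j, h⟩| ≤ δ j) := by
    intro s z₂ u
    constructor
    · intro hm
      refine ⟨(hIcc s u).1 (by simpa using hm i), fun j h => ?_⟩
      have := hm j
      rwa [Function.update_of_ne h, Function.update_of_ne h, hZj z₂ j h] at this
    · rintro ⟨h1, h2⟩ j
      by_cases h : j = i
      · subst h; simpa using (hIcc s u).2 h1
      · rw [Function.update_of_ne h, Function.update_of_ne h, hZj z₂ j h]; exact h2 j h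
  set S : Set ({j : Fin n // ¬j = i} → ℝ) :=
    {z₂ | ∀ j : Fin n, ∀ h : ¬ j = i, |c j - z₂ ⟨j, h⟩| ≤ δ j} with hS
  have hMP := volume_preserving_piEquivPiSubtypeProd (fun _ : Fin n => ℝ)
    (fun j : Fin n => ¬ j = i)
  have hFU : MeasurePreserving (⇑(@MeasurableEquiv.funUnique {j : Fin n // ¬¬j = i} ℝ uinst _))
      (@volume _ (@MeasureSpace.pi {j : Fin n // ¬¬j = i} (Subtype.fintype _) (fun _ => ℝ)
        fun _ => Real.measureSpace)) volume := by
    have hfin : (Subtype.fintype fun j : Fin n => ¬¬j = i) = @Unique.fintype _ uinst :=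
      Subsingleton.elim _ _
    rw [hfin]
    exact @volume_preserving_funUnique {j : Fin n // ¬¬j = i} ℝ uinst _
  -- key computation
  have key : ∀ s : ℝ, (volume.withDensity ω) (box c (Function.update δ i s)) =
      ∫⁻ z₂, S.indicator
        (fun z₂ => ∫⁻ u in Icc (c i - s) (c i + s), ω (Function.update (Z z₂) i u)) z₂ := by
    intro s
    set g : (Fin n → ℝ) → ℝ≥0∞ := (box c (Function.update δ i s)).indicator ω with hg
    have hgm : Measurable g := hω.indicator (box_measurable _ _)
    have h0 : (volume.withDensity ω) (box c (Function.update δ i s)) = ∫⁻ x, g x := by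
      rw [withDensity_apply _ (box_measurable _ _), hg, lintegral_indicator (box_measurable _ _)]
    rw [h0]
    have h1 : ∫⁻ x, g x = ∫⁻ z, g (e.symm z) := ((hMP.symm e).lintegral_comp hgm).symm
    rw [h1, Measure.volume_eq_prod,
      lintegral_prod (fun z => g (e.symm z)) ((hgm.comp e.symm.measurable).aemeasurable)]
    refine lintegral_congr fun z₂ => ?_
    have h2 : ∫⁻ w₁, g (e.symm (z₂, w₁)) =
        ∫⁻ u : ℝ, g (Function.update (Z z₂) i u) := by
      have hFm : Measurable fun w₁ : {j : Fin n // ¬¬j = i} → ℝ => g (e.symm (z₂, w₁)) :=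
        (hgm.comp e.symm.measurable).comp measurable_prodMk_left
      refine Eq.trans ((hFU.symm _).lintegral_comp hFm).symm ?_
      refine lintegral_congr fun u => ?_
      have hfu : (@MeasurableEquiv.funUnique {j : Fin n // ¬¬j = i} ℝ uinst _).symm u = fun _ => u := rfl
      rw [hfu, hZ]
      dsimp only
      rw [hupd]
    rw [h2]
    by_cases hA : z₂ ∈ S
    · have hptw : ∀ u : ℝ, g (Function.update (Z z₂) i u) =
          (Icc (c i - s) (c i + s)).indicator (fun u => ω (Function.update (Z z₂) i u)) u := by
        intro u
        rw [hg]
        by_cases hu : u ∈ Icc (c i - s) (c i + s)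
        · rw [Set.indicator_of_mem hu, Set.indicator_of_mem ((hmem s z₂ u).2 ⟨hu, hA⟩)]
        · rw [Set.indicator_of_notMem hu, Set.indicator_of_notMem
            (fun hc => hu ((hmem s z₂ u).1 hc).1)]
      rw [lintegral_congr hptw, lintegral_indicator measurableSet_Icc,
        Set.indicator_of_mem hA]
    · have hptw : ∀ u : ℝ, g (Function.update (Z z₂) i u) = 0 := by
        intro u
        rw [hg, Set.indicator_of_notMem (fun hc => hA ((hmem s z₂ u).1 hc).2)]
      rw [lintegral_congr hptw, lintegral_zero, Set.indicator_of_notMem hA]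
  -- a.e. goodness of sections
  have hae : ∀ᵐ z₂ ∂(volume : Measure ({j : Fin n // ¬j = i} → ℝ)),
      ∫⁻ u in Icc (c i - r') (c i + r'), ω (Function.update (Z z₂) i u) ≤
        K * ∫⁻ u in Icc (c i - r) (c i + r), ω (Function.update (Z z₂) i u) := by
    have hmap : Measure.map e.symm (volume : Measure (({j : Fin n // ¬j = i} → ℝ) ×
        ({j : Fin n // ¬¬j = i} → ℝ))) = volume := (hMP.symm e).map_eq
    have h0 : ∀ᵐ y ∂(Measure.map e.symm (volume : Measure (({j : Fin n // ¬j = i} → ℝ) ×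
        ({j : Fin n // ¬¬j = i} → ℝ)))),
        ∫⁻ u in Icc (c i - r') (c i + r'), ω (Function.update y i u) ≤
          K * ∫⁻ u in Icc (c i - r) (c i + r), ω (Function.update y i u) := by
      rw [hmap]; exact hsl
    have h1 := ae_of_ae_map e.symm.measurable.aemeasurable h0
    rw [Measure.volume_eq_prod] at h1
    have h2 := Measure.ae_ae_of_ae_prod h1
    have hne : (volume : Measure ({j : Fin n // ¬¬j = i} → ℝ)) ≠ 0 := by
      intro h0'
      have hu : (volume : Measure ({j : Fin n // ¬¬j = i} → ℝ)) Set.univ = 0 := by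
        rw [h0']; rfl
      rw [volume_pi, Measure.pi_univ] at hu
      simp at hu
    haveI : Filter.NeBot (ae (volume : Measure ({j : Fin n // ¬¬j = i} → ℝ))) := ae_neBot.2 hne
    filter_upwards [h2] with z₂ hz₂
    obtain ⟨w₁, hw₁⟩ := hz₂.exists
    have hZeq : ∀ u : ℝ, Function.update (Z z₂) i u =
        Function.update (e.symm (z₂, w₁)) i u := fun u =>
      (hupd z₂ (fun _ => c i) u).trans (hupd z₂ w₁ u).symm
    simpa only [hZeq] using hw₁
  -- assemble
  rw [key r', key r, ← lintegral_const_mul' _ _ hK]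
  refine lintegral_mono_ae ?_
  filter_upwards [hae] with z₂ hz₂
  by_cases hA : z₂ ∈ S
  · rw [Set.indicator_of_mem hA, Set.indicator_of_mem hA]; exact hz₂
  · rw [Set.indicator_of_notMem hA, Set.indicator_of_notMem hA, mul_zero]

lemma two_rpow_ne_top {γ : ℝ} : ((2:ℝ≥0∞) ^ γ) ≠ ⊤ := by
  intro h
  rw [ENNReal.rpow_eq_top_iff] at h
  rcases h with ⟨h, _⟩ | ⟨h, _⟩ <;> simp at h

lemma box_mono (c : Fin n → ℝ) {δ δ' : Fin n → ℝ} (h : ∀ i, δ i ≤ δ' i) :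
    box c δ ⊆ box c δ' := fun y hy i => le_trans (hy i) (h i)

/-- iterated one–coordinate doubling over a finite set of coordinates -/
lemma box_doubling_finset (ω : (Fin n → ℝ) → ℝ≥0∞) (hω : Measurable ω) (γ : ℝ)
    (hdoub : ∀ i : Fin n, ∀ᵐ x ∂(volume : Measure (Fin n → ℝ)), ∀ c r : ℝ, 0 < r →
      ∫⁻ u in Icc (c - 2*r) (c + 2*r), ω (Function.update x i u) ≤
        (2:ℝ≥0∞)^γ * ∫⁻ u in Icc (c - r) (c + r), ω (Function.update x i u))
    (c δ : Fin n → ℝ) (hδ : ∀ i, 0 < δ i) (s : Finset (Fin n)) :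
    (volume.withDensity ω) (box c (fun j => if j ∈ s then 2 * δ j else δ j)) ≤
      ((2:ℝ≥0∞)^γ) ^ s.card * (volume.withDensity ω) (box c δ) := by
  classical
  induction s using Finset.induction_on with
  | empty => simp
  | @insert i s hi ih =>
    have hbig : (fun j => if j ∈ insert i s then 2 * δ j else δ j) =
        Function.update (fun j => if j ∈ s then 2 * δ j else δ j) i (2 * δ i) := by
      funext j
      by_cases h : j = i
      · subst h; simp [hi]
      · rw [Function.update_of_ne h]
        simp [Finset.mem_insert, h]
    have hsmall : (fun j => if j ∈ s then 2 * δ j else δ j) =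
        Function.update (fun j => if j ∈ s then 2 * δ j else δ j) i (δ i) := by
      funext j
      by_cases h : j = i
      · subst h; simp [hi]
      · rw [Function.update_of_ne h]
    have hstep := slice_box ω hω i ((2:ℝ≥0∞)^γ) two_rpow_ne_top c (δ i) (2 * δ i)
      (by filter_upwards [hdoub i] with x hx; exact hx (c i) (δ i) (hδ i))
      (fun j => if j ∈ s then 2 * δ j else δ j)
    rw [← hsmall] at hstep
    rw [hbig]
    refine le_trans hstep ?_
    rw [Finset.card_insert_of_notMem hi, pow_succ, mul_comm (((2:ℝ≥0∞)^γ) ^ s.card), mul_assoc]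
    exact mul_le_mul_right ih _

lemma box_halving_finset (ω : (Fin n → ℝ) → ℝ≥0∞) (hω : Measurable ω) (η : ℝ)
    (hrev : ∀ i : Fin n, ∀ᵐ x ∂(volume : Measure (Fin n → ℝ)), ∀ c r : ℝ, 0 < r →
      ∫⁻ u in Icc (c - r) (c + r), ω (Function.update x i u) ≤
        (2:ℝ≥0∞)^(-η) * ∫⁻ u in Icc (c - 2*r) (c + 2*r), ω (Function.update x i u))
    (c δ : Fin n → ℝ) (hδ : ∀ i, 0 < δ i) (s : Finset (Fin n)) :
    (volume.withDensity ω) (box c δ) ≤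
      ((2:ℝ≥0∞)^(-η)) ^ s.card *
        (volume.withDensity ω) (box c (fun j => if j ∈ s then 2 * δ j else δ j)) := by
  classical
  induction s using Finset.induction_on with
  | empty => simp
  | @insert i s hi ih =>
    have hbig : (fun j => if j ∈ insert i s then 2 * δ j else δ j) =
        Function.update (fun j => if j ∈ s then 2 * δ j else δ j) i (2 * δ i) := by
      funext j
      by_cases h : j = i
      · subst h; simp [hi]
      · rw [Function.update_of_ne h]
        simp [Finset.mem_insert, h]
    have hsmall : (fun j => if j ∈ s then 2 * δ j else δ j) =
        Function.update (fun j => if j ∈ s then 2 * δ j else δ j) i (δ i) := by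
      funext j
      by_cases h : j = i
      · subst h; simp [hi]
      · rw [Function.update_of_ne h]
    have hstep := slice_box ω hω i ((2:ℝ≥0∞)^(-η)) two_rpow_ne_top c (2 * δ i) (δ i)
      (by filter_upwards [hrev i] with x hx; exact hx (c i) (δ i) (hδ i))
      (fun j => if j ∈ s then 2 * δ j else δ j)
    rw [← hsmall, ← hbig] at hstep
    refine le_trans ih ?_
    rw [Finset.card_insert_of_notMem hi, pow_succ, mul_assoc]
    exact mul_le_mul_right hstep _

lemma box_doubling (ω : (Fin n → ℝ) → ℝ≥0∞) (hω : Measurable ω) (γ : ℝ)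
    (hdoub : ∀ i : Fin n, ∀ᵐ x ∂(volume : Measure (Fin n → ℝ)), ∀ c r : ℝ, 0 < r →
      ∫⁻ u in Icc (c - 2*r) (c + 2*r), ω (Function.update x i u) ≤
        (2:ℝ≥0∞)^γ * ∫⁻ u in Icc (c - r) (c + r), ω (Function.update x i u))
    (c δ : Fin n → ℝ) (hδ : ∀ i, 0 < δ i) :
    (volume.withDensity ω) (box c (fun j => 2 * δ j)) ≤
      (2:ℝ≥0∞)^(γ * n) * (volume.withDensity ω) (box c δ) := by
  have h := box_doubling_finset ω hω γ hdoub c δ hδ Finset.univ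
  simp only [Finset.mem_univ, if_true] at h
  refine le_trans h (le_of_eq ?_)
  congr 1
  rw [Finset.card_univ, Fintype.card_fin, ← ENNReal.rpow_natCast ((2:ℝ≥0∞)^γ) n,
    ← ENNReal.rpow_mul]

lemma box_halving (ω : (Fin n → ℝ) → ℝ≥0∞) (hω : Measurable ω) (η : ℝ)
    (hrev : ∀ i : Fin n, ∀ᵐ x ∂(volume : Measure (Fin n → ℝ)), ∀ c r : ℝ, 0 < r →
      ∫⁻ u in Icc (c - r) (c + r), ω (Function.update x i u) ≤
        (2:ℝ≥0∞)^(-η) * ∫⁻ u in Icc (c - 2*r) (c + 2*r), ω (Function.update x i u))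
    (c δ : Fin n → ℝ) (hδ : ∀ i, 0 < δ i) :
    (volume.withDensity ω) (box c δ) ≤
      (2:ℝ≥0∞)^(-(η * n)) * (volume.withDensity ω) (box c (fun j => 2 * δ j)) := by
  have h := box_halving_finset ω hω η hrev c δ hδ Finset.univ
  simp only [Finset.mem_univ, if_true] at h
  refine le_trans (le_trans h (le_of_eq ?_)) le_rfl
  congr 1
  rw [Finset.card_univ, Fintype.card_fin, ← ENNReal.rpow_natCast ((2:ℝ≥0∞)^(-η)) n,
    ← ENNReal.rpow_mul, neg_mul]

lemma rpow_le_rpow_of_nonpos {x y : ℝ≥0∞} {z : ℝ} (hz : z ≤ 0) (h : x ≤ y) : y ^ z ≤ x ^ z := by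
  rw [← neg_neg z, ENNReal.rpow_neg y, ENNReal.rpow_neg x]
  exact ENNReal.inv_le_inv.2 (ENNReal.rpow_le_rpow h (neg_nonneg.2 hz))

lemma rpow_ne_top_of_ne_zero {x : ℝ≥0∞} {z : ℝ} (hx : x ≠ 0) (hz : z ≤ 0) : x ^ z ≠ ⊤ := by
  intro h
  rw [ENNReal.rpow_eq_top_iff] at h
  rcases h with ⟨h1, _⟩ | ⟨_, h2⟩
  · exact hx h1
  · exact absurd h2 (not_lt.2 hz)

lemma exp_ineq_A {η γ nn q p jt m k : ℝ} (hη : 0 < η) (hn : 0 < nn) (hq0 : 0 < q)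
    (hp0 : 0 < p) (hpq : p ≤ q) (hηγ : η ≤ γ) (hm0 : 0 ≤ m) (hmq : m ≤ nn/q)
    (hjt0 : 0 ≤ jt) (hjtk : jt ≤ k + 1) (hk0 : 0 ≤ k) :
    -(η*nn*k)*(1/q) + γ*nn*(1-1/p) ≤ -(η*jt*m) + γ*nn := by
  have e1 : η*jt*m ≤ η*(k+1)*m :=
    mul_le_mul_of_nonneg_right (mul_le_mul_of_nonneg_left hjtk hη.le) hm0
  have e2 : η*(k+1)*m ≤ η*(k+1)*(nn/q) :=
    mul_le_mul_of_nonneg_left hmq (mul_nonneg hη.le (by linarith))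
  have e3 : η*nn/q ≤ γ*nn/p :=
    div_le_div₀ (mul_nonneg (by linarith) hn.le) (mul_le_mul_of_nonneg_right hηγ hn.le) hp0 hpq
  have e5 : γ*nn*(1-1/p) = γ*nn - γ*nn/p := by ring
  have e6 : η*(k+1)*(nn/q) = η*nn*k*(1/q) + η*nn/q := by ring
  linarith

lemma exp_ineq_B {η γ nn β ab jt m k : ℝ} (hη : 0 < η) (hγ : 0 < γ) (hn : 0 < nn)
    (hηγ : η ≤ γ) (hm0 : 0 ≤ m) (hmab : m ≤ ab) (hab0 : 0 ≤ ab) (habβ : ab ≤ β)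
    (hjt0 : 0 ≤ jt) (hjtk : jt ≤ k + 1) (hk0 : 0 ≤ k) :
    -(η*nn*k)*(ab/nn) + γ*nn*(1-β/nn) ≤ -(η*jt*m) + γ*nn := by
  have hc1 : (η*nn*k)*(ab/nn) = η*k*ab := by field_simp
  have hc2 : γ*nn*(1-β/nn) = γ*nn - γ*β := by field_simp
  have e1 : η*jt*m ≤ η*(k+1)*m :=
    mul_le_mul_of_nonneg_right (mul_le_mul_of_nonneg_left hjtk hη.le) hm0
  have e2 : η*(k+1)*m ≤ η*(k+1)*ab :=
    mul_le_mul_of_nonneg_left hmab (mul_nonneg hη.le (by linarith))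
  have e3 : η*ab ≤ γ*β :=
    le_trans (mul_le_mul_of_nonneg_right hηγ hab0) (mul_le_mul_of_nonneg_left habβ hγ.le)
  have e4 : η*(k+1)*ab = η*k*ab + η*ab := by ring
  linarith

end Stmt13Aux

open Stmt13Aux

/-- Single-scale estimate on the truncated cone `Γ_t^j(x)` for the strong fractional
integral, in terms of the cone density `θ_t`, the strong fractional maximal function
`M_β f` and the implicitly defined balance point `τ(t,x)`. -/
theorem stmt13 (n : ℕ) (hn : 0 < n)
    (ω : (Fin n → ℝ) → ℝ≥0∞) (hω : Measurable ω)
    (μ : Measure (Fin n → ℝ)) (hμ : μ = volume.withDensity ω)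
    (γ η : ℝ) (hγ : 0 < γ) (hη : 0 < η)
    (hdoub : ∀ i : Fin n, ∀ᵐ x ∂(volume : Measure (Fin n → ℝ)),
      ∀ c r : ℝ, 0 < r →
        ∫⁻ u in Set.Icc (c - 2*r) (c + 2*r), ω (Function.update x i u) ≤
          (2 : ℝ≥0∞) ^ γ * ∫⁻ u in Set.Icc (c - r) (c + r), ω (Function.update x i u))
    (hrev : ∀ i : Fin n, ∀ᵐ x ∂(volume : Measure (Fin n → ℝ)),
      ∀ c r : ℝ, 0 < r →
        ∫⁻ u in Set.Icc (c - r) (c + r), ω (Function.update x i u) ≤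
          (2 : ℝ≥0∞) ^ (-η) * ∫⁻ u in Set.Icc (c - 2*r) (c + 2*r), ω (Function.update x i u))
    (p q r α β : ℝ) (hp : 1 < p) (hpq : p < q)
    (hα : α / n = 1 / p - 1 / q) (hr : r = (p + q) / 2) (hβ : β / n = 1 / p - 1 / r)
    (f : (Fin n → ℝ) → ℝ≥0∞) (hf : Measurable f)
    (N : ℝ≥0∞) (hN : N = (∫⁻ y, f y ^ p ∂μ) ^ (1 / p)) (hN0 : 0 < N) (hNtop : N ≠ ⊤)
    (Γj : (Fin n → ℤ) → ℤ → (Fin n → ℝ) → Set (Fin n → ℝ))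
    (hΓj : ∀ t j x, Γj t j x = {y | ∀ i,
      (2:ℝ) ^ (j - t i) ≤ |x i - y i| ∧ |x i - y i| < 2 ^ (j + 1 - t i)})
    (Γ : (Fin n → ℤ) → (Fin n → ℝ) → Set (Fin n → ℝ))
    (hΓ : ∀ t x, Γ t x = ⋃ j : ℤ, Γj t j x)
    (V : (Fin n → ℝ) → (Fin n → ℝ) → ℝ≥0∞)
    (hV : ∀ x y, V x y = μ {z | ∀ i, |x i - z i| ≤ |x i - y i|})
    (θ : (Fin n → ℤ) → (Fin n → ℝ) → ℝ≥0∞)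
    (hθ : ∀ t x, θ t x = (∫⁻ y in Γ t x, f y ^ p ∂μ) / N ^ p)
    (M : (Fin n → ℝ) → ℝ≥0∞)
    (hM : ∀ x, M x = ⨆ (δ : Fin n → ℝ) (_ : ∀ i, 0 < δ i),
      μ {y | ∀ i, |x i - y i| < δ i} ^ (β / n - 1) *
        ∫⁻ y in {y | ∀ i, |x i - y i| < δ i}, f y ∂μ)
    (τ : (Fin n → ℤ) → (Fin n → ℝ) → ℝ)
    (hτ : ∀ t x, θ t x ^ (1 / p) * N / M x =
      μ {y | ∀ i, |x i - y i| ≤ (2:ℝ) ^ (τ t x - (t i : ℝ))} ^ (1 / r)) :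
    ∀ t : Fin n → ℤ, ∀ j : ℤ, ∀ᵐ x ∂μ,
      ∫⁻ y in Γj t j x, f y * V x y ^ (α / n - 1) ∂μ ≤
        (2 : ℝ≥0∞) ^ (-(η * |(j : ℝ) - τ t x| * min (α - β) (n / q))) *
          (2 : ℝ≥0∞) ^ (γ * n) *
          θ t x ^ ((1 / p) * (1 - r / q)) * M x ^ (r / q) * N ^ (1 - r / q) := by
  intro t j
  refine MeasureTheory.ae_of_all _ fun x => ?_
  subst hμ
  classical
  set μ' := volume.withDensity ω with hμ'
  -- basic real facts
  have hn' : (0:ℝ) < n := by exact_mod_cast hn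
  have hp0 : (0:ℝ) < p := lt_trans one_pos hp
  have hq1 : (1:ℝ) < q := lt_trans hp hpq
  have hq0 : (0:ℝ) < q := lt_trans one_pos hq1
  have hr1 : (1:ℝ) < r := by rw [hr]; linarith
  have hr0 : (0:ℝ) < r := lt_trans one_pos hr1
  have hpr : p < r := by rw [hr]; linarith
  have hrq : r < q := by rw [hr]; linarith
  have hαe : α = (1/p - 1/q) * n := by rw [← hα, div_mul_cancel₀ _ (ne_of_gt hn')]
  have hβe : β = (1/p - 1/r) * n := by rw [← hβ, div_mul_cancel₀ _ (ne_of_gt hn')]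
  have hpr' : 0 < 1/p - 1/r := by
    rw [sub_pos]; exact one_div_lt_one_div_of_lt hp0 hpr
  have hrq' : 0 < 1/r - 1/q := by
    rw [sub_pos]; exact one_div_lt_one_div_of_lt hr0 hrq
  have hβpos : 0 < β := by rw [hβe]; exact mul_pos hpr' hn'
  have hαβe : α - β = (1/r - 1/q) * n := by rw [hαe, hβe]; ring
  have hαβn : (α - β) / n = 1/r - 1/q := by
    rw [sub_div, hα, hβ]; ring
  have hαβpos : 0 < α - β := by rw [hαβe]; exact mul_pos hrq' hn'
  have hα2β : α ≤ 2 * β := by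
    have hpq2 : (0:ℝ) < p + q := by linarith
    have h2 : 1/r - 1/q - (1/p - 1/r) = (4*p*q - (p+q)^2) / ((p+q)*p*q) := by
      rw [hr]; field_simp; ring
    have h3 : 1/r - 1/q - (1/p - 1/r) ≤ 0 := by
      rw [h2]
      apply div_nonpos_of_nonpos_of_nonneg
      · nlinarith [sq_nonneg (p-q)]
      · positivity
    have h4 : α - 2*β = (1/r - 1/q - (1/p - 1/r)) * n := by rw [hαe, hβe]; ring
    nlinarith [mul_nonpos_of_nonpos_of_nonneg h3 hn'.le]
  have hβltn : β / n < 1 := by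
    rw [hβ]
    have : 0 < 1/r := by positivity
    have h2 : 1/p < 1 := by rw [one_div]; exact inv_lt_one_of_one_lt₀ hp
    linarith
  have hαn1 : α / n - 1 < 0 := by
    rw [hα]
    have h2 : 1/p < 1 := by rw [one_div]; exact inv_lt_one_of_one_lt₀ hp
    have : 0 < 1/q := by positivity
    linarith
  have hrqlt : 0 < 1 - r/q := by
    rw [sub_pos, div_lt_one hq0]; exact hrq
  -- ENNReal basics
  have two0 : (2:ℝ≥0∞) ≠ 0 := by norm_num
  have twot : (2:ℝ≥0∞) ≠ ⊤ := by norm_num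
  -- the scale function
  set ρ : ℝ → ℝ≥0∞ := fun s => μ' (box x (fun i => (2:ℝ)^(s - (t i : ℝ)))) with hρ
  have hradpos : ∀ (s : ℝ) (i : Fin n), (0:ℝ) < (2:ℝ)^(s - (t i:ℝ)) :=
    fun s i => Real.rpow_pos_of_pos two_pos _
  have hρmono : Monotone ρ := by
    intro s s' hss
    exact measure_mono (box_mono _ fun i =>
      Real.rpow_le_rpow_of_exponent_le one_le_two (by linarith))
  have hbox2 : ∀ s : ℝ, (fun i : Fin n => (2:ℝ)^(s + 1 - (t i:ℝ))) =
      fun i => 2 * (2:ℝ)^(s - (t i:ℝ)) := by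
    intro s; funext i
    rw [show s + 1 - (t i:ℝ) = 1 + (s - t i) by ring, Real.rpow_add two_pos, Real.rpow_one]
  have hρd : ∀ s : ℝ, ρ (s+1) ≤ (2:ℝ≥0∞)^(γ * n) * ρ s := by
    intro s
    have h := box_doubling ω hω γ hdoub x (fun i => (2:ℝ)^(s - (t i:ℝ))) (hradpos s)
    rw [← hbox2 s] at h
    exact h
  have hρh : ∀ s : ℝ, ρ s ≤ (2:ℝ≥0∞)^(-(η * n)) * ρ (s+1) := by
    intro s
    have h := box_halving ω hω η hrev x (fun i => (2:ℝ)^(s - (t i:ℝ))) (hradpos s)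
    rw [← hbox2 s] at h
    exact h
  have hρiter : ∀ (s : ℝ) (k : ℕ), ρ s ≤ (2:ℝ≥0∞)^(-(η * n * k)) * ρ (s + k) := by
    intro s k
    induction k with
    | zero => simp
    | succ k ih =>
      refine le_trans ih ?_
      calc (2:ℝ≥0∞)^(-(η * n * k)) * ρ (s + k)
          ≤ (2:ℝ≥0∞)^(-(η * n * k)) * ((2:ℝ≥0∞)^(-(η * n)) * ρ (s + k + 1)) :=
            mul_le_mul_right (hρh (s + k)) _
        _ = (2:ℝ≥0∞)^(-(η * n * ((k:ℕ)+1:ℕ))) * ρ (s + ((k:ℕ)+1:ℕ)) := by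
            rw [← mul_assoc, ← ENNReal.rpow_add _ _ two0 twot]
            congr 2
            · push_cast; ring
            · push_cast; ring
  have hNppos : (0:ℝ≥0∞) < ∫⁻ y, f y ^ p ∂μ' := by
    rcases eq_or_ne (∫⁻ y, f y ^ p ∂μ') 0 with h | h
    · exfalso
      rw [hN, h, ENNReal.zero_rpow_of_pos (by positivity)] at hN0
      exact lt_irrefl _ hN0
    · exact pos_iff_ne_zero.2 h
  have hρpos : ∀ s : ℝ, 0 < ρ s := by
    intro s
    by_contra hzero
    push_neg at hzero
    have hz : ρ s = 0 := le_antisymm hzero zero_le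
    have hiterz : ∀ k : ℕ, ρ (s + k) = 0 := by
      intro k
      induction k with
      | zero => simpa using hz
      | succ k ih =>
        have h2 : ρ (s + k + 1) ≤ (2:ℝ≥0∞)^(γ*n) * ρ (s+k) := hρd (s+k)
        rw [ih, mul_zero] at h2
        have h3 : ρ (s + k + 1) = 0 := le_antisymm h2 zero_le
        have h4 : s + (((k:ℕ)+1:ℕ):ℝ) = s + k + 1 := by push_cast; ring
        rw [h4]
        exact h3
    have huniv : μ' Set.univ = 0 := by
      haveI hFin : Nonempty (Fin n) := ⟨⟨0, hn⟩⟩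
      have hsub : (Set.univ : Set (Fin n → ℝ)) ⊆
          ⋃ k : ℕ, box x (fun i => (2:ℝ)^(s + k - (t i:ℝ))) := by
        intro y _
        obtain ⟨k, hk⟩ := exists_nat_ge (Finset.univ.sup' Finset.univ_nonempty
          (fun i => Real.logb 2 (|x i - y i|) - s + (t i:ℝ)))
        refine Set.mem_iUnion.2 ⟨k, fun i => ?_⟩
        have hki : Real.logb 2 (|x i - y i|) - s + (t i:ℝ) ≤ k :=
          le_trans (Finset.le_sup' (fun i => Real.logb 2 (|x i - y i|) - s + (t i:ℝ)) (Finset.mem_univ i)) hk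
        rcases eq_or_lt_of_le (abs_nonneg (x i - y i)) with habs | habs
        · exact le_of_lt (lt_of_le_of_lt (le_of_eq habs.symm)
            (Real.rpow_pos_of_pos two_pos _))
        · have hlogb := Real.rpow_logb two_pos (by norm_num) habs
          calc |x i - y i| = (2:ℝ) ^ Real.logb 2 (|x i - y i|) := hlogb.symm
            _ ≤ (2:ℝ) ^ (s + (k:ℝ) - (t i:ℝ)) :=
              Real.rpow_le_rpow_of_exponent_le one_le_two (by linarith)
      refine measure_mono_null hsub (measure_iUnion_null fun k => ?_)
      exact hiterz k
    have hμz : μ' = 0 := Measure.measure_univ_eq_zero.mp huniv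
    rw [hμz] at hNppos
    simp at hNppos
  -- N and θ facts
  have hppos : (0:ℝ) < 1/p := by positivity
  have hNp : N ^ p = ∫⁻ y, f y ^ p ∂μ' := by
    rw [hN, ← ENNReal.rpow_mul, one_div, inv_mul_cancel₀ (ne_of_gt hp0), ENNReal.rpow_one]
  have hNp0 : N ^ p ≠ 0 := by rw [hNp]; exact ne_of_gt hNppos
  have hNptop : N ^ p ≠ ⊤ := ENNReal.rpow_ne_top_of_nonneg hp0.le hNtop
  have hN0' : N ≠ 0 := ne_of_gt hN0
  have hΓjsub : ∀ j' : ℤ, Γj t j' x ⊆ Γ t x := by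
    intro j'
    rw [hΓ]
    exact Set.subset_iUnion (fun j'' => Γj t j'' x) j'
  have hΓjm : MeasurableSet (Γj t j x) := by
    rw [hΓj]
    have hset : {y : Fin n → ℝ | ∀ i, (2:ℝ)^(j - t i) ≤ |x i - y i| ∧ |x i - y i| < 2^(j+1 - t i)}
        = ⋂ i, (fun y : Fin n → ℝ => |x i - y i|) ⁻¹'
            (Set.Ico ((2:ℝ)^(j - t i)) (2^(j+1-t i))) := by
      ext y; simp [Set.mem_iInter, Set.mem_Ico]
    rw [hset]
    refine MeasurableSet.iInter fun i => ?_
    exact (measurable_const.sub (measurable_pi_apply i)).abs measurableSet_Ico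
  have hIΓ_le : (∫⁻ y in Γ t x, f y ^ p ∂μ') ≤ N ^ p := by
    rw [hNp]
    calc (∫⁻ y in Γ t x, f y ^ p ∂μ') ≤ ∫⁻ y in Set.univ, f y ^ p ∂μ' :=
          lintegral_mono_set (Set.subset_univ _)
      _ = ∫⁻ y, f y ^ p ∂μ' := by rw [Measure.restrict_univ]
  have hθval : θ t x * N ^ p = ∫⁻ y in Γ t x, f y ^ p ∂μ' := by
    rw [hθ]
    exact ENNReal.div_mul_cancel hNp0 hNptop
  have hθtop : θ t x ≠ ⊤ := by
    rw [hθ]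
    exact ne_of_lt (ENNReal.div_lt_top
      (ne_of_lt (lt_of_le_of_lt hIΓ_le (lt_top_iff_ne_top.2 hNptop))) hNp0)
  have hτx : θ t x ^ (1/p) * N / M x = (ρ (τ t x)) ^ (1/r) := hτ t x
  have hor : (0:ℝ) < 1/r := by positivity
  have hρrne : ∀ s : ℝ, (ρ s) ^ (1/r) ≠ 0 := by
    intro s h
    rcases ENNReal.rpow_eq_zero_iff.1 h with ⟨h1, _⟩ | ⟨_, h2⟩
    · exact ne_of_gt (hρpos s) h1
    · exact absurd h2 (not_lt.2 hor.le)
  have hθpos : 0 < θ t x := by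
    by_contra h
    push_neg at h
    have hθ0 : θ t x = 0 := le_antisymm h zero_le
    refine hρrne (τ t x) ?_
    rw [← hτx, hθ0, ENNReal.zero_rpow_of_pos hppos, zero_mul, ENNReal.zero_div]
  have hMtop : M x ≠ ⊤ := by
    intro htop
    refine hρrne (τ t x) ?_
    rw [← hτx, htop, ENNReal.div_top]
  -- pointwise bound via V
  set If := ∫⁻ y in Γj t j x, f y ∂μ' with hIfdef
  have hzpow : ∀ (a : ℤ) (i : Fin n), (2:ℝ) ^ ((a:ℝ) - (t i:ℝ)) = (2:ℝ) ^ (a - t i) := by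
    intro a i
    rw [show ((a:ℝ) - (t i:ℝ)) = ((a - t i : ℤ):ℝ) by push_cast; ring, Real.rpow_intCast]
  have hVge : ∀ y ∈ Γj t j x, ρ (j:ℝ) ≤ V x y := by
    intro y hy
    rw [hΓj] at hy
    rw [hV]
    refine measure_mono fun z hz => ?_
    intro i
    have h1 : (2:ℝ)^((j:ℝ) - (t i:ℝ)) ≤ |x i - y i| := by rw [hzpow j i]; exact (hy i).1
    exact le_trans (hz i) h1
  have hCj_ne_top : (ρ (j:ℝ))^(α/↑n-1) ≠ ⊤ :=
    rpow_ne_top_of_ne_zero (ne_of_gt (hρpos _)) hαn1.le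
  have hVbound : (∫⁻ y in Γj t j x, f y * V x y ^ (α/↑n - 1) ∂μ') ≤
      (ρ (j:ℝ))^(α/↑n-1) * If := by
    have hVpow : ∀ y ∈ Γj t j x,
        f y * V x y ^ (α/↑n - 1) ≤ f y * (ρ (j:ℝ)) ^ (α/↑n - 1) := fun y hy =>
      mul_le_mul_right (rpow_le_rpow_of_nonpos hαn1.le (hVge y hy)) _
    refine le_trans (setLIntegral_mono' hΓjm hVpow) ?_
    rw [hIfdef, lintegral_mul_const' _ _ hCj_ne_top, mul_comm]
  -- Hölder
  have hp_inv_lt : 1/p < 1 := by rw [one_div]; exact inv_lt_one_of_one_lt₀ hp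
  have h1p : (0:ℝ) ≤ 1 - 1/p := by linarith
  have hconj : p.HolderConjugate (p/(p-1)) := Real.HolderConjugate.conjExponent hp
  have hp'e : 1/(p/(p-1)) = 1 - 1/p := by
    have h := hconj.inv_add_inv_eq_one
    rw [one_div, one_div]
    linarith
  have hAN : (θ t x * N ^ p) ^ (1/p) = θ t x ^ (1/p) * N := by
    rw [ENNReal.mul_rpow_of_nonneg _ _ hppos.le, ← ENNReal.rpow_mul,
      mul_one_div_cancel (ne_of_gt hp0), ENNReal.rpow_one]
  have hμΓj_le : μ' (Γj t j x) ≤ ρ ((j:ℝ)+1) := by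
    refine measure_mono fun y hy => ?_
    rw [hΓj] at hy
    intro i
    show |x i - y i| ≤ (2:ℝ)^((j:ℝ)+1 - (t i:ℝ))
    have h2 : (2:ℝ)^((j:ℝ)+1 - (t i:ℝ)) = (2:ℝ)^(j + 1 - t i) := by
      rw [show ((j:ℝ)+1 - (t i:ℝ)) = (((j + 1 : ℤ)):ℝ) - (t i:ℝ) by push_cast; ring, hzpow (j+1) i]
    rw [h2]
    exact le_of_lt (hy i).2
  have hHolder : If ≤ θ t x ^ (1/p) * N * (ρ ((j:ℝ)+1)) ^ (1 - 1/p) := by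
    have h := ENNReal.lintegral_mul_le_Lp_mul_Lq (μ'.restrict (Γj t j x)) hconj
      hf.aemeasurable (aemeasurable_const (b := (1:ℝ≥0∞)))
    simp only [Pi.mul_apply, mul_one, ENNReal.one_rpow] at h
    rw [lintegral_one, Measure.restrict_apply_univ, hp'e] at h
    refine le_trans h (mul_le_mul' ?_ (ENNReal.rpow_le_rpow hμΓj_le h1p))
    rw [← hAN]
    refine ENNReal.rpow_le_rpow ?_ hppos.le
    rw [hθval]
    exact lintegral_mono_set (hΓjsub j)
  -- the open box for the maximal function
  set δ₀ : Fin n → ℝ := fun i => (2:ℝ)^((j:ℝ)+1 - (t i:ℝ)) with hδ₀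
  have hδ₀pos : ∀ i, 0 < δ₀ i := fun i => Real.rpow_pos_of_pos two_pos _
  set Bo := {y : Fin n → ℝ | ∀ i, |x i - y i| < δ₀ i} with hBodef
  have hΓjBo : Γj t j x ⊆ Bo := by
    intro y hy
    rw [hΓj] at hy
    intro i
    have h2 : δ₀ i = (2:ℝ)^(j + 1 - t i) := by
      rw [hδ₀]
      dsimp only
      rw [show ((j:ℝ)+1 - (t i:ℝ)) = (((j + 1 : ℤ)):ℝ) - (t i:ℝ) by push_cast; ring,
        hzpow (j+1) i]
    rw [h2]
    exact (hy i).2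
  have hμBo_le : μ' Bo ≤ ρ ((j:ℝ)+1) := by
    refine measure_mono fun y hy i => ?_
    show |x i - y i| ≤ (2:ℝ)^((j:ℝ)+1 - (t i:ℝ))
    exact le_of_lt (hy i)
  have hμBo_pos : 0 < μ' Bo := by
    refine lt_of_lt_of_le (hρpos (j:ℝ)) (measure_mono fun y hy i => ?_)
    exact lt_of_le_of_lt (hy i) (Real.rpow_lt_rpow_of_exponent_lt one_lt_two (by linarith))
  have hMterm : μ' Bo ^ (β/↑n - 1) * ∫⁻ y in Bo, f y ∂μ' ≤ M x := by
    rw [hM]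
    exact le_iSup₂ (f := fun (δ : Fin n → ℝ) (_ : ∀ i, 0 < δ i) =>
      μ' {y | ∀ i, |x i - y i| < δ i} ^ (β / ↑n - 1) *
        ∫⁻ y in {y | ∀ i, |x i - y i| < δ i}, f y ∂μ') δ₀ hδ₀pos
  -- case analysis: if ρ j = ⊤ the integrand vanishes
  rcases eq_or_ne (ρ (j:ℝ)) ⊤ with hρtop | hρjtop
  · have hz : (∫⁻ y in Γj t j x, f y * V x y ^ (α/↑n - 1) ∂μ') = 0 := by
      have h0 : ∀ y ∈ Γj t j x, f y * V x y ^ (α/↑n - 1) ≤ 0 := by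
        intro y hy
        have hVtop : V x y = ⊤ := top_unique (hρtop ▸ hVge y hy)
        rw [hVtop, ENNReal.top_rpow_of_neg hαn1, mul_zero]
      exact le_antisymm (le_trans (setLIntegral_mono' hΓjm h0) (by simp)) zero_le
    rw [hz]
    exact zero_le
  have hρjne : ρ (j:ℝ) ≠ 0 := ne_of_gt (hρpos _)
  have hμBo_top : μ' Bo ≠ ⊤ := by
    refine ne_of_lt (lt_of_le_of_lt (le_trans hμBo_le (hρd (j:ℝ))) ?_)
    exact ENNReal.mul_lt_top (lt_top_iff_ne_top.2 two_rpow_ne_top)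
      (lt_top_iff_ne_top.2 hρjtop)
  rcases eq_or_ne (M x) 0 with hMzero | hMne
  · -- M x = 0 : RHS has factor 0, but also LHS = 0
    have hfBo : (∫⁻ y in Bo, f y ∂μ') = 0 := by
      have h1 := hMterm
      rw [hMzero, le_zero_iff] at h1
      rcases mul_eq_zero.1 h1 with h2 | h2
      · exfalso
        rcases ENNReal.rpow_eq_zero_iff.1 h2 with ⟨h3, _⟩ | ⟨h3, _⟩
        · exact absurd h3 (ne_of_gt hμBo_pos)
        · exact absurd h3 hμBo_top
      · exact h2
    have hfΓj : (∫⁻ y in Γj t j x, f y ∂μ') = 0 :=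
      le_antisymm (le_trans (lintegral_mono_set hΓjBo) (le_of_eq hfBo)) zero_le
    have hae0 : ∀ᵐ y ∂(μ'.restrict (Γj t j x)), f y = 0 :=
      (lintegral_eq_zero_iff hf).1 hfΓj
    have hz : (∫⁻ y in Γj t j x, f y * V x y ^ (α/↑n - 1) ∂μ') = 0 := by
      have hcong : (fun y => f y * V x y ^ (α/↑n - 1)) =ᵐ[μ'.restrict (Γj t j x)]
          (fun _ => 0) := by
        filter_upwards [hae0] with y hy
        rw [hy, zero_mul]
      rw [lintegral_congr_ae hcong, lintegral_zero]
    rw [hz]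
    exact zero_le
  · -- main case : M x ≠ 0
    set A := θ t x with hAdef
    set P := ρ (τ t x) with hPdef
    have hA0 : A ≠ 0 := ne_of_gt hθpos
    have hAtop : A ≠ ⊤ := hθtop
    have hnum0 : A ^ (1/p) * N ≠ 0 := by
      refine mul_ne_zero ?_ hN0'
      intro h
      rcases ENNReal.rpow_eq_zero_iff.1 h with ⟨h1, _⟩ | ⟨_, h2⟩
      · exact hA0 h1
      · exact absurd h2 (not_lt.2 hppos.le)
    have hnumtop : A ^ (1/p) * N ≠ ⊤ :=
      ENNReal.mul_ne_top (ENNReal.rpow_ne_top_of_nonneg hppos.le hAtop) hNtop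
    have hPr_top : P ^ (1/r) ≠ ⊤ := by
      rw [← hτx]
      exact ne_of_lt (ENNReal.div_lt_top hnumtop hMne)
    have hPtop : P ≠ ⊤ := by
      intro h
      apply hPr_top
      rw [hPdef] at h
      rw [hPdef, h]
      exact ENNReal.top_rpow_of_pos hor
    have hP0 : P ≠ 0 := ne_of_gt (hρpos _)
    have hAN_MP : A ^ (1/p) * N = M x * P ^ (1/r) := by
      rw [← hτx, ENNReal.mul_div_cancel hMne hMtop]
    have hη_le_γ : η ≤ γ := by
      by_contra hlt
      push_neg at hlt
      have h1 : P ≤ (2:ℝ≥0∞)^(-(η*n)) * ((2:ℝ≥0∞)^(γ*n) * P) :=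
        le_trans (hρh (τ t x)) (mul_le_mul_right (hρd (τ t x)) _)
      have h2 : (2:ℝ≥0∞)^(-(η*n)) * ((2:ℝ≥0∞)^(γ*n) * P) = (2:ℝ≥0∞)^(γ*n - η*n) * P := by
        rw [← mul_assoc, ← ENNReal.rpow_add _ _ two0 twot]
        congr 2
        ring
      have h3 : (2:ℝ≥0∞)^(γ*n - η*n) < 1 := by
        have h4 := ENNReal.rpow_lt_rpow_of_exponent_lt (x := 2) one_lt_two twot
          (y := γ*n - η*n) (z := 0) (sub_neg.mpr (mul_lt_mul_of_pos_right hlt hn'))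
        rwa [ENNReal.rpow_zero] at h4
      have h5 : (2:ℝ≥0∞)^(γ*n - η*n) * P < 1 * P :=
        ENNReal.mul_lt_mul_left hP0 hPtop h3
      rw [one_mul] at h5
      rw [h2] at h1
      exact absurd (lt_of_le_of_lt h1 h5) (lt_irrefl P)
    have h2pow_add : ∀ a b : ℝ, (2:ℝ≥0∞)^a * (2:ℝ≥0∞)^b = (2:ℝ≥0∞)^(a+b) :=
      fun a b => (ENNReal.rpow_add a b two0 twot).symm
    have he : (α-β)/↑n = (1/r)*(1 - r/q) := by
      rw [hαβn]
      field_simp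
    have hW0 : M x ^ (1 - r/q) ≠ 0 := by
      intro h
      rcases ENNReal.rpow_eq_zero_iff.1 h with ⟨h1, _⟩ | ⟨h1, h2⟩
      · exact hMne h1
      · exact absurd h2 (not_lt.2 hrqlt.le)
    have hWtop : M x ^ (1 - r/q) ≠ ⊤ := ENNReal.rpow_ne_top_of_nonneg hrqlt.le hMtop
    have hMsplit : M x = M x ^ (r/q) * M x ^ (1 - r/q) := by
      rw [← ENNReal.rpow_add _ _ hMne hMtop]
      norm_num
    have hT : A ^ ((1/p)*(1 - r/q)) * M x ^ (r/q) * N ^ (1 - r/q) =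
        M x * P ^ ((α-β)/↑n) := by
      calc A ^ ((1/p)*(1 - r/q)) * M x ^ (r/q) * N ^ (1 - r/q)
          = M x ^ (r/q) * (A ^ ((1/p)*(1-r/q)) * N ^ (1-r/q)) := by ring
        _ = M x ^ (r/q) * (M x ^ (1-r/q) *
              ((A ^ ((1/p)*(1-r/q)) * N ^ (1-r/q)) / M x ^ (1-r/q))) := by
            rw [ENNReal.mul_div_cancel hW0 hWtop]
        _ = (M x ^ (r/q) * M x ^ (1-r/q)) *
              ((A ^ ((1/p)*(1-r/q)) * N ^ (1-r/q)) / M x ^ (1-r/q)) := by ring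
        _ = M x * ((A ^ ((1/p)*(1-r/q)) * N ^ (1-r/q)) / M x ^ (1-r/q)) := by
            rw [← hMsplit]
        _ = M x * (((A ^ (1/p)) ^ (1-r/q) * N ^ (1-r/q)) / M x ^ (1-r/q)) := by
            rw [← ENNReal.rpow_mul]
        _ = M x * ((A ^ (1/p) * N) ^ (1-r/q) / M x ^ (1-r/q)) := by
            rw [ENNReal.mul_rpow_of_nonneg _ _ hrqlt.le]
        _ = M x * ((A ^ (1/p) * N / M x) ^ (1-r/q)) := by
            rw [ENNReal.div_rpow_of_nonneg _ _ hrqlt.le]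
        _ = M x * ((P ^ (1/r)) ^ (1-r/q)) := by rw [hτx]
        _ = M x * P ^ ((α-β)/↑n) := by rw [← ENNReal.rpow_mul, ← he]
    set m' := min (α - β) (↑n / q) with hm'
    have hm_pos : 0 < m' := lt_min hαβpos (by positivity)
    have hm_le_nq : m' ≤ ↑n / q := min_le_right _ _
    have hm_le_ab : m' ≤ α - β := min_le_left _ _
    rcases le_or_gt (τ t x) (j:ℝ) with hjτ | hjτ
    · -- j above the balance point : use the Hölder bound
      have habs : |(j:ℝ) - τ t x| = (j:ℝ) - τ t x := abs_of_nonneg (by linarith)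
      set k := ⌊(j:ℝ) - τ t x⌋₊ with hk
      have hk_le : (k:ℝ) ≤ (j:ℝ) - τ t x := Nat.floor_le (by linarith)
      have hk_gt : (j:ℝ) - τ t x < k + 1 := Nat.lt_floor_add_one _
      have hPle : P ≤ (2:ℝ≥0∞)^(-(η*n*k)) * ρ (j:ℝ) := by
        have h1 : P ≤ ρ ((j:ℝ) - k) := hρmono (by linarith)
        have h2 := hρiter ((j:ℝ) - k) k
        rw [sub_add_cancel] at h2
        exact le_trans h1 h2
      have hPsplit : P ^ (1/r) = P ^ ((α-β)/↑n) * P ^ (1/q) := by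
        rw [← ENNReal.rpow_add _ _ hP0 hPtop]
        congr 1
        rw [hαβn]
        ring
      have hPq : P ^ (1/q) ≤ (2:ℝ≥0∞)^(-(η*n*k)*(1/q)) * (ρ (j:ℝ)) ^ (1/q) := by
        refine le_trans (ENNReal.rpow_le_rpow hPle (by positivity)) ?_
        rw [ENNReal.mul_rpow_of_nonneg _ _ (by positivity : (0:ℝ) ≤ 1/q),
          ← ENNReal.rpow_mul]
      have hρ1 : (ρ ((j:ℝ)+1)) ^ (1 - 1/p) ≤
          (2:ℝ≥0∞)^(γ*n*(1-1/p)) * (ρ (j:ℝ)) ^ (1-1/p) := by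
        refine le_trans (ENNReal.rpow_le_rpow (hρd (j:ℝ)) h1p) ?_
        rw [ENNReal.mul_rpow_of_nonneg _ _ h1p, ← ENNReal.rpow_mul]
      have hρcan : (ρ (j:ℝ))^(α/↑n - 1) * ((ρ (j:ℝ))^(1/q) * (ρ (j:ℝ))^(1-1/p)) = 1 := by
        rw [← ENNReal.rpow_add _ _ hρjne hρjtop, ← ENNReal.rpow_add _ _ hρjne hρjtop,
          show α/↑n - 1 + (1/q + (1-1/p)) = 0 from by rw [hα]; ring]
        exact ENNReal.rpow_zero
      calc (∫⁻ y in Γj t j x, f y * V x y ^ (α/↑n - 1) ∂μ')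
          ≤ (ρ (j:ℝ))^(α/↑n - 1) * If := hVbound
        _ ≤ (ρ (j:ℝ))^(α/↑n-1) * (A^(1/p) * N * (ρ ((j:ℝ)+1))^(1-1/p)) :=
            mul_le_mul_right hHolder _
        _ = (ρ (j:ℝ))^(α/↑n-1) * (M x * (P^((α-β)/↑n) * P^(1/q)) *
              (ρ ((j:ℝ)+1))^(1-1/p)) := by
            rw [hAN_MP, hPsplit]
        _ ≤ (ρ (j:ℝ))^(α/↑n-1) * (M x * (P^((α-β)/↑n) *
              ((2:ℝ≥0∞)^(-(η*n*k)*(1/q)) * (ρ (j:ℝ))^(1/q))) *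
              ((2:ℝ≥0∞)^(γ*n*(1-1/p)) * (ρ (j:ℝ))^(1-1/p))) :=
            mul_le_mul_right
              (mul_le_mul' (mul_le_mul_right (mul_le_mul_right hPq _) _) hρ1) _
        _ = ((2:ℝ≥0∞)^(-(η*n*k)*(1/q)) * (2:ℝ≥0∞)^(γ*n*(1-1/p))) *
              (M x * P^((α-β)/↑n)) *
              ((ρ (j:ℝ))^(α/↑n-1) * ((ρ (j:ℝ))^(1/q) * (ρ (j:ℝ))^(1-1/p))) := by
            ring
        _ = ((2:ℝ≥0∞)^(-(η*n*k)*(1/q)) * (2:ℝ≥0∞)^(γ*n*(1-1/p))) *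
              (M x * P^((α-β)/↑n)) := by
            rw [hρcan, mul_one]
        _ ≤ ((2:ℝ≥0∞)^(-(η * |(j:ℝ) - τ t x| * m')) * (2:ℝ≥0∞)^(γ*↑n)) *
              (M x * P^((α-β)/↑n)) := by
            refine mul_le_mul_left ?_ _
            rw [h2pow_add, h2pow_add]
            refine ENNReal.rpow_le_rpow_of_exponent_le one_le_two ?_
            rw [habs]
            exact exp_ineq_A hη hn' hq0 hp0 hpq.le hη_le_γ hm_pos.le hm_le_nq
              (by linarith) (by linarith) (Nat.cast_nonneg k)
        _ = (2:ℝ≥0∞) ^ (-(η * |(j:ℝ) - τ t x| * m')) * (2:ℝ≥0∞) ^ (γ * ↑n) *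
              A ^ ((1/p) * (1 - r/q)) * M x ^ (r/q) * N ^ (1 - r/q) := by
            rw [← hT]
            ring
    · -- j below the balance point : use the maximal-function bound
      have habs : |(j:ℝ) - τ t x| = τ t x - (j:ℝ) := by
        rw [abs_of_neg (by linarith)]
        ring
      set k := ⌊τ t x - (j:ℝ)⌋₊ with hk
      have hk_le : (k:ℝ) ≤ τ t x - (j:ℝ) := Nat.floor_le (by linarith)
      have hk_gt : τ t x - (j:ℝ) < k + 1 := Nat.lt_floor_add_one _
      have hρjP : ρ (j:ℝ) ≤ (2:ℝ≥0∞)^(-(η*n*k)) * P := by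
        refine le_trans (hρiter (j:ℝ) k) (mul_le_mul_right (hρmono ?_) _)
        linarith
      have hBointP : (∫⁻ y in Bo, f y ∂μ') ≤ M x * (μ' Bo) ^ (1 - β/↑n) := by
        have hone : (μ' Bo) ^ (β/↑n - 1) * (μ' Bo) ^ (1 - β/↑n) = 1 := by
          rw [← ENNReal.rpow_add _ _ (ne_of_gt hμBo_pos) hμBo_top,
            show β/↑n - 1 + (1 - β/↑n) = 0 from by ring]
          exact ENNReal.rpow_zero
        calc (∫⁻ y in Bo, f y ∂μ')
            = ((μ' Bo) ^ (β/↑n - 1) * (μ' Bo) ^ (1 - β/↑n)) *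
                (∫⁻ y in Bo, f y ∂μ') := by rw [hone, one_mul]
          _ = ((μ' Bo) ^ (β/↑n - 1) * (∫⁻ y in Bo, f y ∂μ')) * (μ' Bo) ^ (1-β/↑n) := by
              ring
          _ ≤ M x * (μ' Bo) ^ (1-β/↑n) := mul_le_mul_left hMterm _
      have h1βn : (0:ℝ) ≤ 1 - β/↑n := by linarith [hβltn]
      have hIfB : If ≤ M x * ((2:ℝ≥0∞)^(γ*n*(1-β/↑n)) * (ρ (j:ℝ))^(1-β/↑n)) := by
        refine le_trans (lintegral_mono_set hΓjBo) (le_trans hBointP ?_)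
        refine mul_le_mul_right ?_ _
        refine le_trans (ENNReal.rpow_le_rpow (le_trans hμBo_le (hρd (j:ℝ))) h1βn) ?_
        rw [ENNReal.mul_rpow_of_nonneg _ _ h1βn, ← ENNReal.rpow_mul]
      have hρjαβ : (ρ (j:ℝ))^(α/↑n-1) * (ρ (j:ℝ))^(1-β/↑n) = (ρ (j:ℝ))^((α-β)/↑n) := by
        rw [← ENNReal.rpow_add _ _ hρjne hρjtop]
        congr 1
        rw [sub_div]
        ring
      have hαβn_nonneg : (0:ℝ) ≤ (α-β)/↑n := div_nonneg hαβpos.le hn'.le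
      have hραβ_le : (ρ (j:ℝ))^((α-β)/↑n) ≤
          (2:ℝ≥0∞)^(-(η*n*k)*((α-β)/↑n)) * P^((α-β)/↑n) := by
        refine le_trans (ENNReal.rpow_le_rpow hρjP hαβn_nonneg) ?_
        rw [ENNReal.mul_rpow_of_nonneg _ _ hαβn_nonneg, ← ENNReal.rpow_mul]
      calc (∫⁻ y in Γj t j x, f y * V x y ^ (α/↑n - 1) ∂μ')
          ≤ (ρ (j:ℝ))^(α/↑n - 1) * If := hVbound
        _ ≤ (ρ (j:ℝ))^(α/↑n-1) * (M x * ((2:ℝ≥0∞)^(γ*n*(1-β/↑n)) *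
              (ρ (j:ℝ))^(1-β/↑n))) := mul_le_mul_right hIfB _
        _ = (2:ℝ≥0∞)^(γ*n*(1-β/↑n)) * M x *
              ((ρ (j:ℝ))^(α/↑n-1) * (ρ (j:ℝ))^(1-β/↑n)) := by ring
        _ = (2:ℝ≥0∞)^(γ*n*(1-β/↑n)) * M x * (ρ (j:ℝ))^((α-β)/↑n) := by rw [hρjαβ]
        _ ≤ (2:ℝ≥0∞)^(γ*n*(1-β/↑n)) * M x *
              ((2:ℝ≥0∞)^(-(η*n*k)*((α-β)/↑n)) * P^((α-β)/↑n)) :=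
            mul_le_mul_right hραβ_le _
        _ = ((2:ℝ≥0∞)^(-(η*n*k)*((α-β)/↑n)) * (2:ℝ≥0∞)^(γ*n*(1-β/↑n))) *
              (M x * P^((α-β)/↑n)) := by ring
        _ ≤ ((2:ℝ≥0∞)^(-(η * |(j:ℝ) - τ t x| * m')) * (2:ℝ≥0∞)^(γ*↑n)) *
              (M x * P^((α-β)/↑n)) := by
            refine mul_le_mul_left ?_ _
            rw [h2pow_add, h2pow_add]
            refine ENNReal.rpow_le_rpow_of_exponent_le one_le_two ?_
            rw [habs]
            exact exp_ineq_B hη hγ hn' hη_le_γ hm_pos.le hm_le_ab hαβpos.le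
              (by linarith) (by linarith) (by linarith) (Nat.cast_nonneg k)
        _ = (2:ℝ≥0∞) ^ (-(η * |(j:ℝ) - τ t x| * m')) * (2:ℝ≥0∞) ^ (γ * ↑n) *
              A ^ ((1/p) * (1 - r/q)) * M x ^ (r/q) * N ^ (1 - r/q) := by
            rw [← hT]
            ring
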